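/- Suppose κ_1, κ_2, κ_3 are nonzero reals with κ_1κ_2 + κ_1κ_3 + κ_2κ_3 = 0 (the parabolic case), and (x_1, x_2, x_3) are reals with x_1 + x_2 + x_3 = 1 and κ_1^{-1}x_1² + κ_2^{-1}x_2² + κ_3^{-1}x_3² = 0. Set S := κ_1 x_1(x_3² − x_2²) + κ_2 x_2(x_1² − x_3²) + κ_3 x_3(x_2² − x_1²). Then κ_1 x_1(x_3² − x_2²) = x_1·S, κ_2 x_2(x_1² − x_3²) = x_2·S, and κ_3 x_3(x_2² − x_1²) = x_3·S; consequently, every point of the curve C : κ_1^{-1}x_1² + κ_2^{-1}x_2² + κ_3^{-1}x_3² = 0 on the simplex is a stationary point of the trilinear three-vortex system. -/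
import Mathlib


/-- In the parabolic case κ₁κ₂ + κ₁κ₃ + κ₂κ₃ = 0, every point of the curve
C : κ₁⁻¹x₁² + κ₂⁻¹x₂² + κ₃⁻¹x₃² = 0 on the simplex x₁ + x₂ + x₃ = 1 is a
stationary point of the trilinear three-vortex system: each component
κ_j x_j (x_{j''}² − x_{j'}²) of the vector field equals x_j · S, so the
right-hand sides Λ{κ_j x_j(...) − x_j S} all vanish. -/
theorem parabolic_curve_stationary (κ₁ κ₂ κ₃ x₁ x₂ x₃ : ℝ)
    (hκ₁ : κ₁ ≠ 0) (hκ₂ : κ₂ ≠ 0) (hκ₃ : κ₃ ≠ 0)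
    (hpar : κ₁ * κ₂ + κ₁ * κ₃ + κ₂ * κ₃ = 0)
    (hsum : x₁ + x₂ + x₃ = 1)
    (hC : κ₁⁻¹ * x₁ ^ 2 + κ₂⁻¹ * x₂ ^ 2 + κ₃⁻¹ * x₃ ^ 2 = 0) :
    κ₁ * x₁ * (x₃ ^ 2 - x₂ ^ 2) =
      x₁ * (κ₁ * x₁ * (x₃ ^ 2 - x₂ ^ 2) + κ₂ * x₂ * (x₁ ^ 2 - x₃ ^ 2) +
        κ₃ * x₃ * (x₂ ^ 2 - x₁ ^ 2)) ∧
    κ₂ * x₂ * (x₁ ^ 2 - x₃ ^ 2) =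
      x₂ * (κ₁ * x₁ * (x₃ ^ 2 - x₂ ^ 2) + κ₂ * x₂ * (x₁ ^ 2 - x₃ ^ 2) +
        κ₃ * x₃ * (x₂ ^ 2 - x₁ ^ 2)) ∧
    κ₃ * x₃ * (x₂ ^ 2 - x₁ ^ 2) =
      x₃ * (κ₁ * x₁ * (x₃ ^ 2 - x₂ ^ 2) + κ₂ * x₂ * (x₁ ^ 2 - x₃ ^ 2) +
        κ₃ * x₃ * (x₂ ^ 2 - x₁ ^ 2)) := by
  -- Clear denominators in the curve equation.
  have hC' : κ₂ * κ₃ * x₁ ^ 2 + κ₁ * κ₃ * x₂ ^ 2 + κ₁ * κ₂ * x₃ ^ 2 = 0 := by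
    have h := congrArg (fun y => κ₁ * κ₂ * κ₃ * y) hC
    simp only [mul_zero] at h
    field_simp at h
    linarith [h]
  refine ⟨?_, ?_, ?_⟩
  · refine mul_left_cancel₀ (mul_ne_zero hκ₂ hκ₃) ?_
    linear_combination (-(κ₁ * κ₂ * κ₃ * x₁ * (x₃ ^ 2 - x₂ ^ 2))) * hsum +
      (κ₂ * x₁ * x₂ * x₃ ^ 2 - κ₃ * x₁ * x₃ * x₂ ^ 2) * hpar +
      (κ₃ * x₁ * x₃ - κ₂ * x₁ * x₂) * hC'
  · refine mul_left_cancel₀ (mul_ne_zero hκ₁ hκ₃) ?_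
    linear_combination (-(κ₁ * κ₂ * κ₃ * x₂ * (x₁ ^ 2 - x₃ ^ 2))) * hsum +
      (κ₃ * x₂ * x₃ * x₁ ^ 2 - κ₁ * x₁ * x₂ * x₃ ^ 2) * hpar +
      (κ₁ * x₁ * x₂ - κ₃ * x₂ * x₃) * hC'
  · refine mul_left_cancel₀ (mul_ne_zero hκ₁ hκ₂) ?_
    linear_combination (-(κ₁ * κ₂ * κ₃ * x₃ * (x₂ ^ 2 - x₁ ^ 2))) * hsum +
      (κ₁ * x₁ * x₃ * x₂ ^ 2 - κ₂ * x₂ * x₃ * x₁ ^ 2) * hpar +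
      (κ₂ * x₂ * x₃ - κ₁ * x₁ * x₃) * hC'
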